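/- arXiv:1103.4828 — 4 statements merged into one kernel-verified Lean document; each statement's English description precedes it below -/
import Mathlib

section
/- Let {a_k} be a sequence of positive real numbers such that the series ∑_{k≥1} a_k²/a_{k-1} converges. Then the series ∑_{k≥1} a_k converges. -/
theorem stmt_0 (a : ℕ → ℝ) (hpos : ∀ k, 0 < a k)
    (h : Summable fun k => (a (k + 1)) ^ 2 / a k) :
    Summable fun k => a (k + 1) := by
  have hb : ∀ k, 0 ≤ (a (k + 1)) ^ 2 / a k := fun k => div_nonneg (sq_nonneg _) (hpos k).le
  -- pointwise bound
  have key : ∀ k, a (k + 1) ≤ 2 * ((a (k + 1)) ^ 2 / a k) + a k / 2 := by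
    intro k
    rcases le_or_gt (a (k + 1)) (a k / 2) with hle | hlt
    · linarith [hb k]
    · have hak := hpos k
      have h1 : (a (k + 1)) ^ 2 / a k * a k = (a (k + 1)) ^ 2 :=
        div_mul_cancel₀ _ hak.ne'
      nlinarith [hpos (k + 1)]
  set B := ∑' k, ((a (k + 1)) ^ 2 / a k) with hB
  have hBnn : ∀ n, ∑ k ∈ Finset.range n, ((a (k + 1)) ^ 2 / a k) ≤ B :=
    fun n => h.sum_le_tsum _ (fun i _ => hb i)
  apply summable_of_sum_range_le (c := 4 * B + a 0)
  · intro k; exact (hpos (k + 1)).le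
  · intro n
    have h1 : ∑ k ∈ Finset.range n, a (k + 1)
        ≤ 2 * (∑ k ∈ Finset.range n, ((a (k + 1)) ^ 2 / a k))
          + (∑ k ∈ Finset.range n, a k) / 2 := by
      rw [Finset.mul_sum, Finset.sum_div]
      rw [← Finset.sum_add_distrib]
      exact Finset.sum_le_sum fun i _ => key i
    have h2 : ∑ k ∈ Finset.range n, a k ≤ a 0 + ∑ k ∈ Finset.range n, a (k + 1) := by
      have := Finset.sum_range_succ' a n
      have hmono : ∑ k ∈ Finset.range n, a k ≤ ∑ k ∈ Finset.range (n + 1), a k :=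
        Finset.sum_le_sum_of_subset_of_nonneg (Finset.range_subset_range.2 (Nat.le_succ n))
          (fun i _ _ => (hpos i).le)
      rw [this] at hmono
      linarith
    have h3 := hBnn n
    linarith
end

section
/- For every positive sequence a : ℕ → ℝ and every j ≥ 1, (∑_{k=1}^{j} a_{k-1})^{1/2} ≤ √(a_0) + (∑_{k=1}^{j} a_k²/a_{k-1})^{1/2}. -/
private lemma shift_sum (a : ℕ → ℝ) (j : ℕ) :
    ∑ k ∈ Finset.Icc 1 (j + 1), a (k - 1) = a 0 + ∑ k ∈ Finset.Icc 1 j, a k := by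
  induction j with
  | zero => simp
  | succ n ih =>
      rw [Finset.sum_Icc_succ_top (by omega), ih, Finset.sum_Icc_succ_top (by omega)]
      simp [Nat.add_sub_cancel]
      ring

theorem stmt_2 (a : ℕ → ℝ) (hpos : ∀ k, 0 < a k) (j : ℕ) (hj : 1 ≤ j) :
    Real.sqrt (∑ k ∈ Finset.Icc 1 j, a (k - 1)) ≤
      Real.sqrt (a 0) + Real.sqrt (∑ k ∈ Finset.Icc 1 j, (a k) ^ 2 / a (k - 1)) := by
  set S := ∑ k ∈ Finset.Icc 1 j, a (k - 1) with hSdef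
  set T := ∑ k ∈ Finset.Icc 1 j, (a k) ^ 2 / a (k - 1) with hTdef
  have hS0 : 0 ≤ S := Finset.sum_nonneg fun k _ => (hpos _).le
  have hT0 : 0 ≤ T := Finset.sum_nonneg fun k _ =>
    div_nonneg (sq_nonneg _) (hpos _).le
  -- Cauchy-Schwarz
  have hcs : (∑ k ∈ Finset.Icc 1 j, a k) ^ 2 ≤ S * T := by
    have key := Finset.sum_mul_sq_le_sq_mul_sq (Finset.Icc 1 j)
      (fun k => Real.sqrt (a (k - 1))) (fun k => a k / Real.sqrt (a (k - 1)))
    have h1 : ∀ k ∈ Finset.Icc 1 j,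
        Real.sqrt (a (k - 1)) * (a k / Real.sqrt (a (k - 1))) = a k := by
      intro k _
      rw [mul_comm, div_mul_cancel₀ _ (Real.sqrt_pos.mpr (hpos (k-1))).ne']
    have h2 : ∀ k ∈ Finset.Icc 1 j, Real.sqrt (a (k - 1)) ^ 2 = a (k - 1) := by
      intro k _; exact Real.sq_sqrt (hpos _).le
    have h3 : ∀ k ∈ Finset.Icc 1 j,
        (a k / Real.sqrt (a (k - 1))) ^ 2 = (a k) ^ 2 / a (k - 1) := by
      intro k _
      rw [div_pow, Real.sq_sqrt (hpos _).le]
    rw [Finset.sum_congr rfl h1, Finset.sum_congr rfl h2, Finset.sum_congr rfl h3] at key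
    exact key
  have hsum0 : 0 ≤ ∑ k ∈ Finset.Icc 1 j, a k :=
    Finset.sum_nonneg fun k _ => (hpos _).le
  have hsum_le : ∑ k ∈ Finset.Icc 1 j, a k ≤ Real.sqrt S * Real.sqrt T := by
    rw [← Real.sqrt_mul_self hsum0, ← Real.sqrt_mul hS0]
    exact Real.sqrt_le_sqrt (by nlinarith)
  -- S ≤ a 0 + ∑ a k
  have hshift : S ≤ a 0 + ∑ k ∈ Finset.Icc 1 j, a k := by
    obtain ⟨m, rfl⟩ : ∃ m, j = m + 1 := ⟨j - 1, by omega⟩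
    rw [hSdef, shift_sum]
    have : ∑ k ∈ Finset.Icc 1 m, a k ≤ ∑ k ∈ Finset.Icc 1 (m + 1), a k := by
      apply Finset.sum_le_sum_of_subset_of_nonneg
      · exact Finset.Icc_subset_Icc le_rfl (by omega)
      · exact fun k _ _ => (hpos _).le
    linarith
  have hkey : S ≤ a 0 + Real.sqrt S * Real.sqrt T := by linarith
  have hx : Real.sqrt S * Real.sqrt S = S := Real.mul_self_sqrt hS0
  have hy : Real.sqrt (a 0) * Real.sqrt (a 0) = a 0 := Real.mul_self_sqrt (hpos 0).le
  have hxn : 0 ≤ Real.sqrt S := Real.sqrt_nonneg _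
  have hyn : 0 ≤ Real.sqrt (a 0) := Real.sqrt_nonneg _
  have hzn : 0 ≤ Real.sqrt T := Real.sqrt_nonneg _
  nlinarith [sq_nonneg (Real.sqrt S - Real.sqrt (a 0)), sq_nonneg (Real.sqrt S - Real.sqrt T),
    mul_nonneg hxn hzn, mul_nonneg hyn hzn, mul_nonneg hxn hyn]
end

section
/- Let f : ℝⁿ → ℝ ∪ {+∞} be proper, lower semicontinuous, bounded below, and continuous on its domain, satisfying the KL property at every point of dom ∂f. Let {x_k} be a bounded sequence with x_0 ∈ dom f satisfying, for constants a, b > 0: (H1) f(x_{k+1}) + a‖x_{k+1} − x_k‖² ≤ f(x_k), and (H2) there exists w_{k+1} ∈ ∂f(x_{k+1}) with ‖w_{k+1}‖ ≤ b‖x_{k+1} − x_k‖. Then ∑ ‖x_{k+1} − x_k‖ < ∞ and {x_k} converges to a critical point x̃ of f (i.e., 0 ∈ ∂f(x̃)), with f(x_k) → f(x̃). -/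
open Filter

/-- The Fréchet subdifferential of an extended-real-valued function. -/
def frechetSubdiff {n : ℕ} (f : EuclideanSpace ℝ (Fin n) → EReal)
    (x : EuclideanSpace ℝ (Fin n)) : Set (EuclideanSpace ℝ (Fin n)) :=
  {v | f x ≠ ⊤ ∧ ∀ ε : ℝ, 0 < ε → ∀ᶠ y in nhds x,
      f x + (((inner ℝ v (y - x) : ℝ) - ε * ‖y - x‖ : ℝ) : EReal) ≤ f y}

/-- The limiting (Mordukhovich) subdifferential. -/
def limitingSubdiff {n : ℕ} (f : EuclideanSpace ℝ (Fin n) → EReal)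
    (x : EuclideanSpace ℝ (Fin n)) : Set (EuclideanSpace ℝ (Fin n)) :=
  {v | ∃ xs vs : ℕ → EuclideanSpace ℝ (Fin n),
      (∀ k, vs k ∈ frechetSubdiff f (xs k)) ∧
      Tendsto xs atTop (nhds x) ∧ Tendsto vs atTop (nhds v) ∧
      Tendsto (fun k => f (xs k)) atTop (nhds (f x))}

/-- The Kurdyka–Łojasiewicz property at a point. -/
def KLAt {n : ℕ} (f : EuclideanSpace ℝ (Fin n) → EReal)
    (xbar : EuclideanSpace ℝ (Fin n)) : Prop :=
  ∃ η : ℝ, 0 < η ∧ ∃ U ∈ nhds xbar, ∃ φ φ' : ℝ → ℝ,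
    φ 0 = 0 ∧ (∀ s ∈ Set.Ico (0 : ℝ) η, 0 ≤ φ s) ∧
    ContinuousOn φ (Set.Ico 0 η) ∧ ConcaveOn ℝ (Set.Ico 0 η) φ ∧
    (∀ s ∈ Set.Ioo (0 : ℝ) η, HasDerivAt φ (φ' s) s ∧ 0 < φ' s) ∧
    ∀ x ∈ U, f xbar < f x → f x < f xbar + (η : EReal) →
      ∀ v ∈ limitingSubdiff f x,
        1 ≤ φ' ((f x).toReal - (f xbar).toReal) * ‖v‖

lemma amgm_aux (d u v : ℝ) (hd : 0 ≤ d) (hu : 0 ≤ u) (hv : 0 ≤ v) (h : d^2 ≤ u*v) :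
    2*d ≤ u + v := by nlinarith [sq_nonneg (u-v), sq_nonneg (u+v-2*d)]

lemma tangent_le {η : ℝ} {φ φ' : ℝ → ℝ}
    (hconc : ConcaveOn ℝ (Set.Ico 0 η) φ)
    (hd : ∀ s ∈ Set.Ioo (0:ℝ) η, HasDerivAt φ (φ' s) s) :
    ∀ s ∈ Set.Ioo (0:ℝ) η, ∀ t ∈ Set.Ioo (0:ℝ) η, s ≤ t →
      φ' t * (t - s) ≤ φ t - φ s := by
  intro s hs t ht hst
  rcases eq_or_lt_of_le hst with rfl | hlt
  · simp
  have hts : (0:ℝ) < t - s := sub_pos.2 hlt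
  rw [← le_div_iff₀ hts]
  have hslope : Tendsto (slope φ t) (nhdsWithin t (Set.Ioi t)) (nhds (φ' t)) := by
    have h1 := ((hd t ht).hasDerivWithinAt (s := Set.Ioi t))
    rw [hasDerivWithinAt_iff_tendsto_slope] at h1
    rwa [Set.diff_singleton_eq_self (by simp)] at h1
  refine le_of_tendsto hslope ?_
  filter_upwards [Ioo_mem_nhdsGT_of_mem (Set.mem_Ico.2 ⟨le_refl t, ht.2⟩)] with u hu
  rw [slope_def_field]
  have := hconc.slope_anti_adjacent (Set.mem_Ico.2 ⟨le_of_lt hs.1, lt_trans hlt ht.2⟩)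
    (Set.mem_Ico.2 ⟨le_of_lt (lt_trans hs.1 (lt_trans hlt hu.1)), hu.2⟩) hlt hu.1
  calc (φ u - φ t)/(u - t) ≤ (φ t - φ s)/(t - s) := this
  _ = _ := rfl

lemma norm_le_sum_tel {E : Type*} [NormedAddCommGroup E] (x : ℕ → E) (K j : ℕ) (h : K ≤ j) :
    ‖x j - x K‖ ≤ ∑ k ∈ Finset.Ico K j, ‖x (k+1) - x k‖ := by
  induction j, h using Nat.le_induction with
  | base => simp
  | succ j hj ih =>
    rw [Finset.sum_Ico_succ_top (by omega)]
    have h2 := norm_sub_le_norm_sub_add_norm_sub (x (j+1)) (x j) (x K)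
    linarith

lemma limiting_closed {n : ℕ} (f : EuclideanSpace ℝ (Fin n) → EReal)
    (y w : ℕ → EuclideanSpace ℝ (Fin n)) (xt : EuclideanSpace ℝ (Fin n))
    (ρ : ℕ → ℝ) (r : ℝ)
    (hw : ∀ k, w k ∈ limitingSubdiff f (y k))
    (hfy : ∀ k, f (y k) = ((ρ k : ℝ) : EReal))
    (hy : Tendsto y atTop (nhds xt)) (hw0 : Tendsto w atTop (nhds 0))
    (hρ : Tendsto ρ atTop (nhds r)) (hfx : f xt = (r : EReal)) :
    (0 : EuclideanSpace ℝ (Fin n)) ∈ limitingSubdiff f xt := by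
  have key : ∀ k : ℕ, ∃ z v : EuclideanSpace ℝ (Fin n),
      v ∈ frechetSubdiff f z ∧ dist z (y k) < 1/(k+1) ∧ dist v (w k) < 1/(k+1) ∧
      f z ∈ Set.Ioo ((ρ k - 1/(k+1) : ℝ) : EReal) ((ρ k + 1/(k+1) : ℝ) : EReal) := by
    intro k
    obtain ⟨xs, vs, hfre, hxs, hvs, hfs⟩ := hw k
    have hk : (0:ℝ) < 1/(k+1) := by positivity
    have h1 : ∀ᶠ j in atTop, dist (xs j) (y k) < 1/(k+1) := Metric.tendsto_nhds.1 hxs _ hk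
    have h2 : ∀ᶠ j in atTop, dist (vs j) (w k) < 1/(k+1) := Metric.tendsto_nhds.1 hvs _ hk
    have h3 : ∀ᶠ j in atTop, f (xs j) ∈
        Set.Ioo ((ρ k - 1/(k+1) : ℝ) : EReal) ((ρ k + 1/(k+1) : ℝ) : EReal) := by
      apply hfs
      rw [hfy k]
      apply Ioo_mem_nhds
      · exact_mod_cast (by linarith : ρ k - 1/(k+1) < ρ k)
      · exact_mod_cast (by linarith : ρ k < ρ k + 1/(k+1))
    obtain ⟨j, hj1, hj2, hj3⟩ := (h1.and (h2.and h3)).exists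
    exact ⟨xs j, vs j, hfre j, hj1, hj2, hj3⟩
  choose z v hfre hz hv hfz using key
  have hinv : Tendsto (fun k : ℕ => 1/((k:ℝ)+1)) atTop (nhds 0) :=
    tendsto_one_div_add_atTop_nhds_zero_nat
  have hzx : Tendsto z atTop (nhds xt) := by
    rw [tendsto_iff_dist_tendsto_zero]
    apply squeeze_zero (fun k => dist_nonneg)
      (fun k => (dist_triangle (z k) (y k) xt).trans
        (add_le_add (le_of_lt (hz k)) (le_refl _)))
    have : Tendsto (fun k => dist (y k) xt) atTop (nhds 0) :=
      tendsto_iff_dist_tendsto_zero.1 hy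
    simpa using hinv.add this
  have hv0 : Tendsto v atTop (nhds 0) := by
    rw [tendsto_iff_dist_tendsto_zero]
    apply squeeze_zero (fun k => dist_nonneg)
      (fun k => (dist_triangle (v k) (w k) 0).trans
        (add_le_add (le_of_lt (hv k)) (le_refl _)))
    have : Tendsto (fun k => dist (w k) 0) atTop (nhds 0) :=
      tendsto_iff_dist_tendsto_zero.1 hw0
    simpa using hinv.add this
  have hne : ∀ k, f (z k) ≠ ⊤ ∧ f (z k) ≠ ⊥ := by
    intro k
    exact ⟨ne_top_of_lt (hfz k).2, ne_bot_of_gt (hfz k).1⟩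
  have hcoe : ∀ k, f (z k) = (((f (z k)).toReal : ℝ) : EReal) := fun k =>
    (EReal.coe_toReal (hne k).1 (hne k).2).symm
  have hσlt : ∀ k, ρ k - 1/(k+1) < (f (z k)).toReal ∧ (f (z k)).toReal < ρ k + 1/(k+1) := by
    intro k
    obtain ⟨hl, hr⟩ := hfz k
    rw [hcoe k] at hl hr
    exact ⟨EReal.coe_lt_coe_iff.1 hl, EReal.coe_lt_coe_iff.1 hr⟩
  have hσ : Tendsto (fun k => (f (z k)).toReal) atTop (nhds r) := by
    have hl : Tendsto (fun k : ℕ => ρ k - 1/((k:ℝ)+1)) atTop (nhds r) := by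
      simpa using hρ.sub hinv
    have hr : Tendsto (fun k : ℕ => ρ k + 1/((k:ℝ)+1)) atTop (nhds r) := by
      simpa using hρ.add hinv
    exact tendsto_of_tendsto_of_tendsto_of_le_of_le hl hr
      (fun k => le_of_lt (hσlt k).1) (fun k => le_of_lt (hσlt k).2)
  refine ⟨z, v, hfre, hzx, hv0, ?_⟩
  rw [hfx]
  exact Tendsto.congr (fun k => (hcoe k).symm) (EReal.tendsto_coe.2 hσ)


set_option maxHeartbeats 1000000 in
/-- Abstract convergence of inexact descent sequences for KL functions
(Euclidean case of Theorem 5.1 of the paper). -/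
theorem stmt_14 {n : ℕ} (f : EuclideanSpace ℝ (Fin n) → EReal)
    (hproper : ∃ z, f z ≠ ⊤) (hbot : ∀ z, f z ≠ ⊥)
    (hlsc : LowerSemicontinuous f)
    (hbdd : ∃ m : ℝ, ∀ z, (m : EReal) ≤ f z)
    (hcont : ContinuousOn f {z | f z ≠ ⊤})
    (hKL : ∀ z, (limitingSubdiff f z).Nonempty → KLAt f z)
    (a b : ℝ) (ha : 0 < a) (hb : 0 < b)
    (x : ℕ → EuclideanSpace ℝ (Fin n))
    (hx0 : f (x 0) ≠ ⊤)
    (hbound : ∃ R : ℝ, ∀ k, ‖x k‖ ≤ R)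
    (hH1 : ∀ k, f (x (k + 1)) + ((a * ‖x (k + 1) - x k‖ ^ 2 : ℝ) : EReal) ≤ f (x k))
    (hH2 : ∀ k, ∃ w ∈ limitingSubdiff f (x (k + 1)), ‖w‖ ≤ b * ‖x (k + 1) - x k‖) :
    (Summable fun k => ‖x (k + 1) - x k‖) ∧
      ∃ xt : EuclideanSpace ℝ (Fin n),
        Tendsto x atTop (nhds xt) ∧
        (0 : EuclideanSpace ℝ (Fin n)) ∈ limitingSubdiff f xt ∧
        Tendsto (fun k => f (x k)) atTop (nhds (f xt)) := by
  classical
  obtain ⟨m, hm⟩ := hbdd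
  set d : ℕ → ℝ := fun k => ‖x (k + 1) - x k‖ with hddef
  have hd0 : ∀ k, 0 ≤ d k := fun k => norm_nonneg _
  -- all values finite
  have hne : ∀ k, f (x k) ≠ ⊤ := by
    intro k
    induction k with
    | zero => exact hx0
    | succ k ih =>
      intro htop
      have h := hH1 k
      rw [htop] at h
      rw [EReal.top_add_of_ne_bot (EReal.coe_ne_bot _)] at h
      exact ih (top_le_iff.1 h)
  set F : ℕ → ℝ := fun k => (f (x k)).toReal with hFdef
  have hF : ∀ k, f (x k) = ((F k : ℝ) : EReal) := fun k =>
    (EReal.coe_toReal (hne k) (hbot _)).symm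
  have hH1' : ∀ k, F (k + 1) + a * d k ^ 2 ≤ F k := by
    intro k
    have h := hH1 k
    rw [hF k, hF (k+1), ← EReal.coe_add, EReal.coe_le_coe_iff] at h
    exact h
  have hanti : Antitone F := antitone_nat_of_succ_le (by
    intro k
    have := hH1' k
    nlinarith [hd0 k, sq_nonneg (d k)])
  have hFm : ∀ k, m ≤ F k := by
    intro k
    have := hm (x k)
    rw [hF k, EReal.coe_le_coe_iff] at this
    exact this
  have hbddF : BddBelow (Set.range F) := ⟨m, by rintro y ⟨k, rfl⟩; exact hFm k⟩
  set L : ℝ := ⨅ k, F k with hLdef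
  have hFl : Tendsto F atTop (nhds L) := tendsto_atTop_ciInf hanti hbddF
  have hlF : ∀ k, L ≤ F k := fun k => ciInf_le hbddF k
  -- d tends to zero
  have hd2 : ∀ k, a * d k ^ 2 ≤ F k - F (k+1) := fun k => by linarith [hH1' k]
  have hdto : Tendsto d atTop (nhds 0) := by
    have hsq : Tendsto (fun k => d k ^ 2) atTop (nhds 0) := by
      apply squeeze_zero (fun k => sq_nonneg _) (fun k => ?_)
        (g := fun k => (F k - F (k+1)) / a)
      · have h1 : Tendsto (fun k => F (k+1)) atTop (nhds L) :=
          hFl.comp (tendsto_add_atTop_nat 1)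
        have := (hFl.sub h1).div_const a
        simpa using this
      · rw [le_div_iff₀ ha]
        linarith [hd2 k]
    have : Tendsto (fun k => Real.sqrt (d k ^ 2)) atTop (nhds 0) := by
      have := (Real.continuous_sqrt.tendsto 0).comp hsq
      simpa using (by exact this : Tendsto (fun k => Real.sqrt (d k ^ 2)) atTop (nhds (Real.sqrt 0)))
    exact this.congr (fun k => Real.sqrt_sq (hd0 k))
  -- convergent subsequence
  obtain ⟨R, hR⟩ := hbound
  obtain ⟨xt, -, ψ, hψmono, hψtend⟩ := tendsto_subseq_of_bounded
    (Metric.isBounded_closedBall (x := (0 : EuclideanSpace ℝ (Fin n))) (r := R))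
    (fun k => mem_closedBall_zero_iff.2 (hR k))
  have hψatTop : Tendsto ψ atTop atTop := hψmono.tendsto_atTop
  have hFψ : Tendsto (fun j => F (ψ j)) atTop (nhds L) := hFl.comp hψatTop
  -- value at limit
  have hxtne : f xt ≠ ⊤ := by
    intro htop
    have hev : ∀ᶠ z in nhds xt, ((L + 1 : ℝ) : EReal) < f z := by
      apply hlsc xt
      rw [htop]; exact lt_top_iff_ne_top.2 (EReal.coe_ne_top _)
    have h1 : ∀ᶠ j in atTop, ((L + 1 : ℝ) : EReal) < f (x (ψ j)) := hψtend.eventually hev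
    have h2 : ∀ᶠ j in atTop, F (ψ j) < L + 1 := hFψ.eventually_lt_const (by linarith)
    obtain ⟨j, hj1, hj2⟩ := (h1.and h2).exists
    rw [hF (ψ j), EReal.coe_lt_coe_iff] at hj1
    linarith
  have hFxt : f xt = ((L : ℝ) : EReal) := by
    have hcw := hcont xt hxtne
    have htend1 : Tendsto (fun j => f (x (ψ j))) atTop (nhds (f xt)) := by
      apply hcw.tendsto.comp
      rw [tendsto_nhdsWithin_iff]
      exact ⟨hψtend, Eventually.of_forall (fun j => hne (ψ j))⟩
    have htend2 : Tendsto (fun j => f (x (ψ j))) atTop (nhds ((L : ℝ) : EReal)) :=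
      Tendsto.congr (fun j => (hF (ψ j)).symm) (EReal.tendsto_coe.2 hFψ)
    exact tendsto_nhds_unique htend1 htend2
  -- subgradients from H2
  choose w hwmem hwle using hH2
  -- 0 is a limiting subgradient at xt
  have hyψ : Tendsto (fun j => x (ψ j + 1)) atTop (nhds xt) := by
    have hsub : Tendsto (fun j => x (ψ j + 1) - x (ψ j)) atTop (nhds 0) := by
      rw [tendsto_zero_iff_norm_tendsto_zero]
      exact hdto.comp hψatTop
    have := hsub.add hψtend
    simpa using this
  have h0mem : (0 : EuclideanSpace ℝ (Fin n)) ∈ limitingSubdiff f xt := by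
    apply limiting_closed f (fun j => x (ψ j + 1)) (fun j => w (ψ j)) xt
      (fun j => F (ψ j + 1)) L (fun j => hwmem (ψ j)) (fun j => hF (ψ j + 1)) hyψ ?_ ?_ hFxt
    · rw [tendsto_zero_iff_norm_tendsto_zero]
      apply squeeze_zero (fun j => norm_nonneg _) (fun j => hwle (ψ j))
      have := (hdto.comp hψatTop).const_mul b
      simpa using this
    · have h1 : Tendsto (fun j => ψ j + 1) atTop atTop :=
        tendsto_atTop_mono (fun j => Nat.le_succ _) hψatTop
      exact hFl.comp h1
  -- case split
  by_cases hdeg : ∃ K, F K ≤ L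
  · -- degenerate case: sequence eventually constant
    obtain ⟨K, hK⟩ := hdeg
    have hFeq : ∀ j, K ≤ j → F j = L := fun j hj =>
      le_antisymm ((hanti hj).trans hK) (hlF j)
    have hdz : ∀ j, K ≤ j → d j = 0 := by
      intro j hj
      have h1 := hH1' j
      rw [hFeq j hj, hFeq (j+1) (by omega)] at h1
      have h3 : d j ^ 2 ≤ 0 := by nlinarith
      have h4 : d j ^ 2 = 0 := le_antisymm h3 (sq_nonneg _)
      exact pow_eq_zero_iff two_ne_zero |>.1 h4
    have hxconst : ∀ j, K ≤ j → x j = x K := by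
      intro j hj
      induction j, hj using Nat.le_induction with
      | base => rfl
      | succ j hj ih =>
        have h1 : ‖x (j+1) - x j‖ = 0 := hdz j hj
        have h2 : x (j+1) = x j := by
          rw [norm_eq_zero, sub_eq_zero] at h1
          exact h1
        rw [h2, ih]
    have hxtK : xt = x K := by
      apply tendsto_nhds_unique hψtend
      apply tendsto_const_nhds.congr'
      filter_upwards [eventually_ge_atTop K] with j hj
      exact (hxconst (ψ j) (hj.trans hψmono.le_apply)).symm
    refine ⟨summable_of_ne_finset_zero (s := Finset.range K) ?_, xt, ?_, h0mem, ?_⟩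
    · intro k hk
      exact hdz k (by simpa using hk)
    · apply tendsto_const_nhds.congr'
      filter_upwards [eventually_ge_atTop K] with j hj
      rw [hxtK]
      exact (hxconst j hj).symm
    · apply tendsto_const_nhds.congr'
      filter_upwards [eventually_ge_atTop K] with j hj
      rw [hxtK, hxconst j hj]
  · -- nondegenerate case
    push_neg at hdeg
    have hpos : ∀ k, L < F k := hdeg
    obtain ⟨η, hη, U, hU, φ, φ', hφ0, hφnn, hφcont, hφconc, hφd, hKLineq⟩ := hKL xt ⟨0, h0mem⟩
    obtain ⟨δ, hδ, hball⟩ := Metric.mem_nhds_iff.1 hU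
    set Δ : ℕ → ℝ := fun k => F k - L with hΔdef
    set S : ℕ → ℝ := fun k => φ (F k - L) with hSdef
    have hΔpos : ∀ k, 0 < Δ k := fun k => sub_pos.2 (hpos k)
    obtain ⟨K₀, hK₀⟩ := eventually_atTop.1 (hFl.eventually_lt_const (by linarith : L < L + η))
    have hΔmem : ∀ k, K₀ ≤ k → Δ k ∈ Set.Ioo (0:ℝ) η := fun k hk =>
      ⟨hΔpos k, by have := hK₀ k hk; simp only [hΔdef]; linarith⟩
    have hSnn : ∀ j, K₀ ≤ j → 0 ≤ S j := fun j hj =>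
      hφnn _ (Set.mem_Ico.2 ⟨(hΔpos j).le, (hΔmem j hj).2⟩)
    have hba : (0:ℝ) ≤ b / a := by positivity
    -- key one-step estimate
    have hkey : ∀ k, K₀ ≤ k → ‖x (k+1) - xt‖ < δ →
        2 * d (k+1) ≤ d k + (b/a) * (S (k+1) - S (k+2)) := by
      intro k hk hxb
      have hΔ1 := hΔmem (k+1) (by omega)
      have hΔ2 := hΔmem (k+2) (by omega)
      have hKL1 : (1:ℝ) ≤ φ' (Δ (k+1)) * ‖w k‖ := by
        have hmem : x (k+1) ∈ U := hball (by rwa [Metric.mem_ball, dist_eq_norm])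
        have hlt1 : f xt < f (x (k+1)) := by
          rw [hFxt, hF (k+1)]
          exact_mod_cast hpos (k+1)
        have hlt2 : f (x (k+1)) < f xt + (η : EReal) := by
          rw [hFxt, hF (k+1), ← EReal.coe_add]
          exact_mod_cast hK₀ (k+1) (by omega)
        have h := hKLineq (x (k+1)) hmem hlt1 hlt2 (w k) (hwmem k)
        rw [hFxt] at h
        have heq : (f (x (k+1))).toReal - ((L:ℝ):EReal).toReal = Δ (k+1) := by
          rw [hF (k+1)]
          simp [hΔdef]
        rwa [heq] at h
      have hwb : ‖w k‖ ≤ b * d k := hwle k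
      have hφpos : 0 < φ' (Δ (k+1)) := (hφd _ hΔ1).2
      have htang : φ' (Δ (k+1)) * (Δ (k+1) - Δ (k+2)) ≤ S (k+1) - S (k+2) := by
        have hmono : Δ (k+2) ≤ Δ (k+1) := by
          simp only [hΔdef]
          have : F (k+2) ≤ F (k+1) := hanti (by omega)
          linarith
        exact tangent_le hφconc (fun s hs => (hφd s hs).1) (Δ (k+2)) hΔ2 (Δ (k+1)) hΔ1 hmono
      have hdec : a * d (k+1)^2 ≤ Δ (k+1) - Δ (k+2) := by
        have := hH1' (k+1)
        simp only [hΔdef]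
        linarith
      have hΔd : 0 ≤ Δ (k+1) - Δ (k+2) := le_trans (by positivity) hdec
      have hchain : a * d (k+1)^2 ≤ (S (k+1) - S (k+2)) * (b * d k) := by
        calc a * d (k+1)^2 ≤ (Δ (k+1) - Δ (k+2)) * 1 := by linarith
        _ ≤ (Δ (k+1) - Δ (k+2)) * (φ' (Δ (k+1)) * (b * d k)) := by
            apply mul_le_mul_of_nonneg_left _ hΔd
            calc (1:ℝ) ≤ φ' (Δ (k+1)) * ‖w k‖ := hKL1
            _ ≤ φ' (Δ (k+1)) * (b * d k) := mul_le_mul_of_nonneg_left hwb hφpos.le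
        _ = (φ' (Δ (k+1)) * (Δ (k+1) - Δ (k+2))) * (b * d k) := by ring
        _ ≤ (S (k+1) - S (k+2)) * (b * d k) :=
            mul_le_mul_of_nonneg_right htang (by positivity)
      have hSd : 0 ≤ S (k+1) - S (k+2) := le_trans (mul_nonneg hφpos.le hΔd) htang
      have hsq : d (k+1)^2 ≤ d k * ((b/a) * (S (k+1) - S (k+2))) := by
        rw [← mul_le_mul_iff_right₀ ha]
        calc a * d (k+1)^2 ≤ (S (k+1) - S (k+2)) * (b * d k) := hchain
        _ = a * (d k * (b/a * (S (k+1) - S (k+2)))) := by field_simp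
      exact amgm_aux _ _ _ (hd0 _) (hd0 _) (mul_nonneg hba hSd) hsq
    -- S tends to 0
    have hSto : Tendsto S atTop (nhds 0) := by
      have hc : ContinuousWithinAt φ (Set.Ico 0 η) 0 :=
        hφcont 0 (Set.mem_Ico.2 ⟨le_refl _, hη⟩)
      have hΔto : Tendsto (fun k => F k - L) atTop (nhds 0) := by
        simpa using hFl.sub_const L
      have hΔin : ∀ᶠ k in atTop, F k - L ∈ Set.Ico 0 η :=
        eventually_atTop.2 ⟨K₀, fun k hk =>
          Set.mem_Ico.2 ⟨by linarith [hlF k], by linarith [hK₀ k hk]⟩⟩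
      have := hc.tendsto.comp (tendsto_nhdsWithin_iff.2 ⟨hΔto, hΔin⟩)
      rw [hφ0] at this
      exact this
    -- choose base index p
    have hev : ∀ᶠ k in atTop, K₀ ≤ k ∧ d k < δ/6 ∧ (b/a) * S (k+1) < δ/3 := by
      refine (eventually_ge_atTop K₀).and ((hdto.eventually_lt_const (by positivity)).and ?_)
      have h1 : Tendsto (fun k => (b/a) * S (k+1)) atTop (nhds 0) := by
        simpa using ((hSto.comp (tendsto_add_atTop_nat 1)).const_mul (b/a))
      exact h1.eventually_lt_const (by positivity)
    obtain ⟨N, hN⟩ := eventually_atTop.1 hev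
    have hj4 : ∀ᶠ j in atTop, ‖x (ψ j) - xt‖ < δ/6 := by
      have := Metric.tendsto_nhds.1 hψtend (δ/6) (by positivity)
      simpa [dist_eq_norm] using this
    obtain ⟨j₀, hj₀a, hj₀b⟩ := (hj4.and (eventually_ge_atTop N)).exists
    set p := ψ j₀ with hpdef
    obtain ⟨hpK₀, hdp, hSp⟩ := hN p (le_trans hj₀b hψmono.le_apply)
    have hxp : ‖x p - xt‖ < δ/6 := hj₀a
    have hxp1 : ‖x (p+1) - xt‖ < δ/3 := by
      have h1 := norm_sub_le_norm_sub_add_norm_sub (x (p+1)) (x p) xt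
      have h2 : ‖x (p+1) - x p‖ < δ/6 := hdp
      linarith
    -- main induction
    have hmain : ∀ mm : ℕ,
        (∀ i, p+1 ≤ i → i ≤ p+1+mm → ‖x i - xt‖ < δ) ∧
        (∑ k ∈ Finset.Ico (p+1) (p+1+mm), d k) + d (p+mm) ≤
          d p + (b/a) * (S (p+1) - S (p+1+mm)) := by
      intro mm
      induction mm with
      | zero =>
        constructor
        · intro i h1 h2
          have hi : i = p+1 := by omega
          subst hi
          linarith
        · simp
      | succ mm ih =>
        obtain ⟨ihb, ihs⟩ := ih
        have hxball : ‖x (p+mm+1) - xt‖ < δ := by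
          have := ihb (p+1+mm) (by omega) (by omega)
          rwa [show p+mm+1 = p+1+mm from by omega]
        have hkey' := hkey (p+mm) (by omega) hxball
        rw [show p+mm+1 = p+1+mm from by omega, show p+mm+2 = p+1+(mm+1) from by omega] at hkey'
        have hsum : ∑ k ∈ Finset.Ico (p+1) (p+1+(mm+1)), d k =
            (∑ k ∈ Finset.Ico (p+1) (p+1+mm), d k) + d (p+1+mm) := by
          rw [show p+1+(mm+1) = (p+1+mm)+1 from by omega]
          exact Finset.sum_Ico_succ_top (by omega) _
        have hinv : (∑ k ∈ Finset.Ico (p+1) (p+1+(mm+1)), d k) + d (p+(mm+1)) ≤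
            d p + (b/a) * (S (p+1) - S (p+1+(mm+1))) := by
          rw [hsum, show p+(mm+1) = p+1+mm from by omega]
          linarith
        refine ⟨?_, hinv⟩
        intro i h1 h2
        rcases Nat.lt_or_ge i (p+1+(mm+1)) with hlt | hge
        · exact ihb i h1 (by omega)
        · have hi : i = p+1+(mm+1) := by omega
          subst hi
          have ht1 : ‖x (p+1+(mm+1)) - x (p+1)‖ ≤
              ∑ k ∈ Finset.Ico (p+1) (p+1+(mm+1)), d k :=
            norm_le_sum_tel x (p+1) _ (by omega)
          have ht2 := norm_sub_le_norm_sub_add_norm_sub (x (p+1+(mm+1))) (x (p+1)) xt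
          have hS1 : 0 ≤ S (p+1+(mm+1)) := hSnn _ (by omega)
          have hS2 : 0 ≤ (b/a) * S (p+1+(mm+1)) := mul_nonneg hba hS1
          have hd1 : 0 ≤ d (p+(mm+1)) := hd0 _
          have : (∑ k ∈ Finset.Ico (p+1) (p+1+(mm+1)), d k) ≤
              d p + (b/a) * S (p+1) := by
            have := hinv
            nlinarith
          linarith
    -- summability
    have hsum_bound : ∀ mm, ∑ k ∈ Finset.Ico (p+1) (p+1+mm), d k ≤
        d p + (b/a) * S (p+1) := by
      intro mm
      obtain ⟨-, hs⟩ := hmain mm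
      have hS1 : 0 ≤ S (p+1+mm) := hSnn _ (by omega)
      have hS2 : 0 ≤ (b/a) * S (p+1+mm) := mul_nonneg hba hS1
      have hd1 : 0 ≤ d (p+mm) := hd0 _
      nlinarith
    have hsummable : Summable d := by
      have h1 : Summable (fun i => d (p+1+i)) := by
        apply summable_of_sum_range_le (c := d p + (b/a) * S (p+1)) (fun i => hd0 _)
        intro mm
        have := hsum_bound mm
        rw [Finset.sum_Ico_eq_sum_range] at this
        simpa using this
      have h2 : Summable (fun i => d (i + (p+1))) :=
        h1.congr (fun i => by rw [Nat.add_comm])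
      exact (summable_nat_add_iff (p+1)).1 h2
    have hcauchy : CauchySeq x := by
      apply cauchySeq_of_summable_dist
      apply hsummable.congr
      intro k
      rw [dist_eq_norm, norm_sub_rev]
    obtain ⟨xl, hxl⟩ := cauchySeq_tendsto_of_complete hcauchy
    have hxlxt : xt = xl := tendsto_nhds_unique hψtend (hxl.comp hψatTop)
    refine ⟨hsummable, xt, ?_, h0mem, ?_⟩
    · rwa [hxlxt]
    · rw [hFxt]
      exact Tendsto.congr (fun k => (hF k).symm) (EReal.tendsto_coe.2 hFl)
end

section
/- Let f : ℝⁿ → ℝ ∪ {+∞} be proper lsc, bounded below, continuous on its domain, and a KL function. Fix 0 < λ̄ ≤ λ̃ < ∞, θ ∈ (0,1], b > 0, and let {x_k} be an inexact proximal sequence: for each k there are λ_k ∈ [λ̄, λ̃] and w_{k+1} ∈ ∂f(x_{k+1}) with f(x_{k+1}) + (θλ_k/2)‖x_{k+1} − x_k‖² ≤ f(x_k) and ‖w_{k+1}‖ ≤ bλ_k‖x_{k+1} − x_k‖, with x_0 ∈ dom f. If {x_k} is bounded, then it converges to a critical point of f. -/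
open Filter

lemma concave_tangent_le {η : ℝ} {φ : ℝ → ℝ} (hconc : ConcaveOn ℝ (Set.Ico 0 η) φ)
    {s t p : ℝ} (hs : s ∈ Set.Ico (0:ℝ) η) (ht : t ∈ Set.Ico (0:ℝ) η)
    (hst : s ≤ t) (hd : HasDerivAt φ p t) :
    p * (t - s) ≤ φ t - φ s := by
  rcases eq_or_lt_of_le hst with rfl | hlt
  · simp
  · set g : ℝ → ℝ := fun l => φ (t + l * (s - t)) with hg
    have hinner : HasDerivAt (fun l : ℝ => t + l * (s - t)) (s - t) 0 := by
      simpa [mul_comm] using ((hasDerivAt_id (0:ℝ)).const_mul (s - t)).const_add t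
    have hgd : HasDerivAt g (p * (s - t)) 0 := by
      have := HasDerivAt.comp 0 (by simpa using hd) hinner
      simpa [hg, mul_comm, Function.comp_def] using this
    have htend : Tendsto (fun l => (g l - g 0) / l) (nhdsWithin 0 (Set.Ioi 0))
        (nhds (p * (s - t))) := by
      have h1 := hasDerivAt_iff_tendsto_slope.mp hgd
      have h2 : Tendsto (slope g 0) (nhdsWithin 0 (Set.Ioi 0)) (nhds (p * (s - t))) :=
        h1.mono_left (nhdsWithin_mono _ (by intro l hl; exact ne_of_gt hl))
      refine h2.congr' ?_
      filter_upwards [self_mem_nhdsWithin] with l hl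
      simp [slope_def_field, div_eq_div_iff, sub_zero]
    have hev : ∀ᶠ l in nhdsWithin 0 (Set.Ioi 0), φ s - φ t ≤ (g l - g 0) / l := by
      filter_upwards [Ioc_mem_nhdsGT_of_mem (Set.mem_Ico.mpr ⟨le_refl (0:ℝ), one_pos⟩)] with l hl
      have hl0 : 0 < l := hl.1
      have hl1 : l ≤ 1 := hl.2
      have hcomb := hconc.2 hs ht (le_of_lt hl0) (by linarith : (0:ℝ) ≤ 1 - l) (by ring)
      have hpt : l • s + (1 - l) • t = t + l * (s - t) := by simp [smul_eq_mul]; ring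
      rw [hpt] at hcomb
      have hg0 : g 0 = φ t := by simp [hg]
      rw [le_div_iff₀ hl0, hg0]
      simp only [hg, smul_eq_mul] at hcomb ⊢
      nlinarith [hcomb]
    have := ge_of_tendsto htend hev
    nlinarith [this]

lemma limitingSubdiff_closed {n : ℕ} (f : EuclideanSpace ℝ (Fin n) → EReal)
    (xb : EuclideanSpace ℝ (Fin n)) (y v : ℕ → EuclideanSpace ℝ (Fin n))
    (r : ℕ → ℝ) (L : ℝ)
    (hmem : ∀ j, v j ∈ limitingSubdiff f (y j))
    (hfr : ∀ j, f (y j) = ((r j : ℝ) : EReal))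
    (hy : Tendsto y atTop (nhds xb)) (hv : Tendsto v atTop (nhds 0))
    (hr : Tendsto r atTop (nhds L)) (hfx : f xb = (L : EReal)) :
    0 ∈ limitingSubdiff f xb := by
  have heps : ∀ j : ℕ, (0:ℝ) < 1 / (j + 1) := by
    intro j; positivity
  have hsel : ∀ j : ℕ, ∃ X V : EuclideanSpace ℝ (Fin n),
      V ∈ frechetSubdiff f X ∧ dist X (y j) < 1/(j+1) ∧ dist V (v j) < 1/(j+1) ∧
      f X ∈ Set.Ioo ((r j - 1/(j+1) : ℝ) : EReal) ((r j + 1/(j+1) : ℝ) : EReal) := by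
    intro j
    obtain ⟨xs, vs, hF, hxs, hvs, hfs⟩ := hmem j
    have h1 : ∀ᶠ m in atTop, dist (xs m) (y j) < 1/(j+1) :=
      (Metric.tendsto_nhds.mp hxs) _ (heps j)
    have h2 : ∀ᶠ m in atTop, dist (vs m) (v j) < 1/(j+1) :=
      (Metric.tendsto_nhds.mp hvs) _ (heps j)
    have hnb : Set.Ioo ((r j - 1/(j+1) : ℝ) : EReal) ((r j + 1/(j+1) : ℝ) : EReal)
        ∈ nhds (f (y j)) := by
      rw [hfr j]
      exact Ioo_mem_nhds (by exact_mod_cast sub_lt_self _ (heps j))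
        (by exact_mod_cast lt_add_of_pos_right _ (heps j))
    have h3 : ∀ᶠ m in atTop, f (xs m) ∈ Set.Ioo ((r j - 1/(j+1) : ℝ) : EReal)
        ((r j + 1/(j+1) : ℝ) : EReal) := hfs.eventually_mem hnb
    obtain ⟨m, hm1, hm2, hm3⟩ := (h1.and (h2.and h3)).exists
    exact ⟨xs m, vs m, hF m, hm1, hm2, hm3⟩
  choose X V hF hX hV hfX using hsel
  have hinv : Tendsto (fun j : ℕ => 1/(j+1) : ℕ → ℝ) atTop (nhds 0) :=
    tendsto_one_div_add_atTop_nhds_zero_nat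
  have htX : Tendsto X atTop (nhds xb) := by
    rw [tendsto_iff_dist_tendsto_zero]
    refine squeeze_zero (g := fun j : ℕ => 1/(j+1) + dist (y j) xb)
      (fun j => dist_nonneg) (fun j => ?_) ?_
    · exact (dist_triangle (X j) (y j) xb).trans
        (add_le_add (le_of_lt (hX j)) le_rfl)
    · simpa using hinv.add (tendsto_iff_dist_tendsto_zero.mp hy)
  have htV : Tendsto V atTop (nhds 0) := by
    rw [tendsto_iff_dist_tendsto_zero]
    refine squeeze_zero (g := fun j : ℕ => 1/(j+1) + dist (v j) 0)
      (fun j => dist_nonneg) (fun j => ?_) ?_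
    · exact (dist_triangle (V j) (v j) 0).trans
        (add_le_add (le_of_lt (hV j)) le_rfl)
    · simpa using hinv.add (tendsto_iff_dist_tendsto_zero.mp hv)
  have hXfin : ∀ j, f (X j) ≠ ⊤ ∧ f (X j) ≠ ⊥ := by
    intro j
    obtain ⟨h1, h2⟩ := hfX j
    exact ⟨ne_top_of_lt h2, ne_bot_of_gt h1⟩
  have hXcoe : ∀ j, f (X j) = (((f (X j)).toReal : ℝ) : EReal) := fun j =>
    (EReal.coe_toReal (hXfin j).1 (hXfin j).2).symm
  have hbound : ∀ j, |(f (X j)).toReal - r j| ≤ 1/(j+1) := by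
    intro j
    obtain ⟨h1, h2⟩ := hfX j
    rw [hXcoe j] at h1 h2
    rw [EReal.coe_lt_coe_iff] at h1 h2
    rw [abs_le]; constructor <;> linarith
  have htR : Tendsto (fun j => (f (X j)).toReal) atTop (nhds L) := by
    have hdiff : Tendsto (fun j => (f (X j)).toReal - r j) atTop (nhds 0) :=
      squeeze_zero_norm hbound hinv
    have := hdiff.add hr
    simpa using this
  have htf : Tendsto (fun j => f (X j)) atTop (nhds (f xb)) := by
    rw [hfx]
    have : Tendsto (fun j => (((f (X j)).toReal : ℝ) : EReal)) atTop (nhds (L : EReal)) :=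
      EReal.tendsto_coe.mpr htR
    exact this.congr (fun j => (hXcoe j).symm)
  exact ⟨X, V, hF, htX, htV, htf⟩

set_option maxHeartbeats 1000000 in
/-- Convergence of the inexact proximal point method for KL functions
(Euclidean case of Theorem 6.1 of the paper). -/
theorem stmt_17 {n : ℕ} (f : EuclideanSpace ℝ (Fin n) → EReal)
    (hproper : ∃ z, f z ≠ ⊤) (hbot : ∀ z, f z ≠ ⊥)
    (hlsc : LowerSemicontinuous f)
    (hbdd : ∃ m : ℝ, ∀ z, (m : EReal) ≤ f z)
    (hcont : ContinuousOn f {z | f z ≠ ⊤})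
    (hKL : ∀ z, (limitingSubdiff f z).Nonempty → KLAt f z)
    (lamLow lamUp θ b : ℝ)
    (hlam : 0 < lamLow) (hlamle : lamLow ≤ lamUp)
    (hθ : θ ∈ Set.Ioc (0 : ℝ) 1) (hb : 0 < b)
    (lam : ℕ → ℝ) (hlamk : ∀ k, lam k ∈ Set.Icc lamLow lamUp)
    (x : ℕ → EuclideanSpace ℝ (Fin n)) (hx0 : f (x 0) ≠ ⊤)
    (hH1 : ∀ k, f (x (k + 1)) +
      (((θ * lam k / 2) * ‖x (k + 1) - x k‖ ^ 2 : ℝ) : EReal) ≤ f (x k))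
    (hH2 : ∀ k, ∃ w ∈ limitingSubdiff f (x (k + 1)),
      ‖w‖ ≤ b * lam k * ‖x (k + 1) - x k‖)
    (hbound : ∃ R : ℝ, ∀ k, ‖x k‖ ≤ R) :
    ∃ xt : EuclideanSpace ℝ (Fin n),
      Tendsto x atTop (nhds xt) ∧
      (0 : EuclideanSpace ℝ (Fin n)) ∈ limitingSubdiff f xt := by
  obtain ⟨m, hm⟩ := hbdd
  obtain ⟨θpos, θle⟩ := hθ
  set d : ℕ → ℝ := fun k => ‖x (k+1) - x k‖ with hddef
  have hdnn : ∀ k, 0 ≤ d k := fun k => norm_nonneg _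
  -- finiteness
  have hfin : ∀ k, f (x k) ≠ ⊤ := by
    intro k
    induction k with
    | zero => exact hx0
    | succ k ih =>
      have hlk : 0 < lam k := lt_of_lt_of_le hlam (hlamk k).1
      have hc : (0:ℝ) ≤ θ * lam k / 2 * ‖x (k+1) - x k‖^2 := by positivity
      have h1 : f (x (k+1)) ≤ f (x (k+1)) +
          ((θ * lam k / 2 * ‖x (k+1) - x k‖^2 : ℝ) : EReal) := by
        nth_rewrite 1 [← add_zero (f (x (k+1)))]
        exact add_le_add le_rfl (by exact_mod_cast hc)
      exact ne_top_of_le_ne_top ih (h1.trans (hH1 k))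
  set F : ℕ → ℝ := fun k => (f (x k)).toReal with hFdef
  have hcoe : ∀ k, f (x k) = ((F k : ℝ) : EReal) := fun k =>
    (EReal.coe_toReal (hfin k) (hbot _)).symm
  set a : ℝ := θ * lamLow / 2 with hadef
  have ha : 0 < a := by positivity
  have hdec : ∀ k, F (k+1) + a * d k ^ 2 ≤ F k := by
    intro k
    have h := hH1 k
    rw [hcoe k, hcoe (k+1), ← EReal.coe_add, EReal.coe_le_coe_iff] at h
    have hlk := (hlamk k).1
    have : a * d k ^2 ≤ θ * lam k / 2 * d k^2 := by
      apply mul_le_mul_of_nonneg_right _ (sq_nonneg _)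
      rw [hadef]; nlinarith
    simp only [hddef] at this ⊢
    linarith
  have hmono : ∀ k, F (k+1) ≤ F k := fun k => by nlinarith [hdec k, sq_nonneg (d k)]
  have hFanti : Antitone F := antitone_nat_of_succ_le hmono
  have hFbd : ∀ k, m ≤ F k := by
    intro k; have := hm (x k); rw [hcoe k] at this; exact_mod_cast this
  set L : ℝ := ⨅ k, F k with hLdef
  have hbdd' : BddBelow (Set.range F) := ⟨m, by rintro _ ⟨k, rfl⟩; exact hFbd k⟩
  have hFL : Tendsto F atTop (nhds L) := tendsto_atTop_ciInf hFanti hbdd'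
  have hLle : ∀ k, L ≤ F k := fun k => ciInf_le hbdd' k
  have hFsucc : Tendsto (fun k => F (k+1)) atTop (nhds L) :=
    hFL.comp (tendsto_add_atTop_nat 1)
  have hd0 : Tendsto d atTop (nhds 0) := by
    have hdiff : Tendsto (fun k => F k - F (k+1)) atTop (nhds 0) := by
      have := hFL.sub hFsucc
      simpa using this
    have hsq : Tendsto (fun k => d k ^ 2) atTop (nhds 0) := by
      refine squeeze_zero (g := fun k => (F k - F (k+1))/a) (fun k => sq_nonneg _) (fun k => ?_) ?_
      · exact (le_div_iff₀' ha).mpr (by linarith [hdec k])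
      · have := hdiff.div_const a
        simpa using this
    have h := (Real.continuous_sqrt.tendsto 0).comp hsq
    rw [Real.sqrt_zero] at h
    exact h.congr (fun k => Real.sqrt_sq (hdnn k))
  choose w hwmem hwnorm using hH2
  have hwnorm' : ∀ k, ‖w k‖ ≤ b * lamUp * d k := by
    intro k
    refine (hwnorm k).trans ?_
    have : b * lam k ≤ b * lamUp := mul_le_mul_of_nonneg_left (hlamk k).2 hb.le
    exact mul_le_mul_of_nonneg_right this (norm_nonneg _)
  by_cases hcase : ∀ k, L < F k
  case neg =>
    push_neg at hcase
    obtain ⟨K, hK⟩ := hcase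
    have hconstF : ∀ k, K ≤ k → F k = L := fun k hk =>
      le_antisymm (le_trans (hFanti hk) hK) (hLle k)
    have hdz : ∀ k, K ≤ k → d k = 0 := by
      intro k hk
      have h1 := hdec k
      have h2 : F k = L := hconstF k hk
      have h3 : F (k+1) = L := hconstF (k+1) (by omega)
      have : d k ^ 2 ≤ 0 := by nlinarith
      have : d k ^ 2 = 0 := le_antisymm this (sq_nonneg _)
      exact pow_eq_zero_iff (by norm_num) |>.mp this
    have hxconst : ∀ k, K ≤ k → x k = x K := by
      intro k hk
      induction k, hk using Nat.le_induction with
      | base => rfl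
      | succ k hk ih =>
        have h1 : x (k+1) - x k = 0 := by
          have := hdz k hk
          simpa [hddef] using this
        rw [sub_eq_zero] at h1
        rw [h1, ih]
    have hxt : Tendsto x atTop (nhds (x K)) := by
      apply Tendsto.congr' _ (tendsto_const_nhds (x := x K))
      filter_upwards [eventually_ge_atTop K] with k hk
      exact (hxconst k hk).symm
    have hw0 : w K = 0 := by
      have h1 : ‖w K‖ ≤ 0 := by
        have := hwnorm K
        have hdK : ‖x (K+1) - x K‖ = 0 := hdz K le_rfl
        rw [hdK, mul_zero] at this
        exact this
      simpa using le_antisymm h1 (norm_nonneg _)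
    have hx1 : x (K+1) = x K := hxconst (K+1) (by omega)
    refine ⟨x K, hxt, ?_⟩
    have := hwmem K
    rwa [hw0, hx1] at this
  case pos =>
    obtain ⟨R, hR⟩ := hbound
    have hcpt : IsCompact (Metric.closedBall (0 : EuclideanSpace ℝ (Fin n)) R) :=
      isCompact_closedBall _ _
    have hxmem : ∀ k, x k ∈ Metric.closedBall (0 : EuclideanSpace ℝ (Fin n)) R := fun k => by
      simpa [Metric.mem_closedBall, dist_zero_right] using hR k
    obtain ⟨xb, hxbmem, σ, hσ, hxσ⟩ := hcpt.tendsto_subseq hxmem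
    have hσtop : Tendsto σ atTop atTop := hσ.tendsto_atTop
    have hFσ : Tendsto (fun j => F (σ j)) atTop (nhds L) := hFL.comp hσtop
    have hfσ : Tendsto (fun j => f (x (σ j))) atTop (nhds ((L : ℝ) : EReal)) := by
      have := EReal.tendsto_coe.mpr hFσ
      exact this.congr fun j => (hcoe _).symm
    have hfxb_le : f xb ≤ ((L : ℝ) : EReal) := by
      by_contra hcon
      push_neg at hcon
      obtain ⟨c, hc1, hc2⟩ := exists_between hcon
      have hcne : c ≠ ⊤ := (lt_of_lt_of_le hc2 le_top).ne
      have hcnb : c ≠ ⊥ := ne_bot_of_gt hc1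
      set cr := c.toReal with hcr
      have hcc : c = ((cr : ℝ) : EReal) := (EReal.coe_toReal hcne hcnb).symm
      have hev1 : ∀ᶠ j in atTop, c < f ((x ∘ σ) j) := hxσ.eventually (hlsc xb c hc2)
      have hev2 : ∀ᶠ j in atTop, F (σ j) < cr := by
        apply hFσ.eventually_lt_const
        rw [hcc] at hc1
        exact_mod_cast hc1
      obtain ⟨j, hj1, hj2⟩ := (hev1.and hev2).exists
      rw [Function.comp_apply, hcoe, hcc, EReal.coe_lt_coe_iff] at hj1
      linarith
    have hxbS : f xb ≠ ⊤ := ne_top_of_le_ne_top (by simp) hfxb_le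
    have hfxb : f xb = ((L : ℝ) : EReal) := by
      have hten : Tendsto (x ∘ σ) atTop (nhdsWithin xb {z | f z ≠ ⊤}) :=
        tendsto_nhdsWithin_of_tendsto_nhds_of_eventually_within _ hxσ
          (Eventually.of_forall (fun j => hfin (σ j)))
      have h2 : Tendsto (fun j => f (x (σ j))) atTop (nhds (f xb)) :=
        (hcont xb hxbS).tendsto.comp hten
      exact tendsto_nhds_unique h2 hfσ
    have hσd : Tendsto (fun j => d (σ j)) atTop (nhds 0) := hd0.comp hσtop
    have hσ1 : Tendsto (fun j => σ j + 1) atTop atTop :=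
      tendsto_atTop_mono (fun j => Nat.le_succ (σ j)) hσtop
    have hy : Tendsto (fun j => x (σ j + 1)) atTop (nhds xb) := by
      rw [tendsto_iff_dist_tendsto_zero]
      refine squeeze_zero (g := fun j => d (σ j) + dist (x (σ j)) xb)
        (fun _ => dist_nonneg) (fun j => ?_) ?_
      · refine (dist_triangle (x (σ j + 1)) (x (σ j)) xb).trans ?_
        apply add_le_add _ le_rfl
        rw [dist_eq_norm]
      · simpa using hσd.add (tendsto_iff_dist_tendsto_zero.mp hxσ)
    have hvt : Tendsto (fun j => w (σ j)) atTop (nhds 0) := by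
      rw [tendsto_zero_iff_norm_tendsto_zero]
      refine squeeze_zero (g := fun j => b * lamUp * d (σ j))
        (fun _ => norm_nonneg _) (fun j => hwnorm' (σ j)) ?_
      have := hσd.const_mul (b * lamUp)
      simpa using this
    have h0mem : (0 : EuclideanSpace ℝ (Fin n)) ∈ limitingSubdiff f xb :=
      limitingSubdiff_closed f xb (fun j => x (σ j + 1)) (fun j => w (σ j))
        (fun j => F (σ j + 1)) L (fun j => hwmem (σ j)) (fun j => hcoe _)
        hy hvt (hFL.comp hσ1) hfxb
    obtain ⟨η, hη, U, hU, φ, φ', hφ0, hφnn, hφcont, hφconc, hφd, hKLineq⟩ :=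
      hKL xb ⟨0, h0mem⟩
    set r : ℕ → ℝ := fun k => F k - L with hrdef
    have hrpos : ∀ k, 0 < r k := fun k => sub_pos.mpr (hcase k)
    have hranti : Antitone r :=
      antitone_nat_of_succ_le (fun k => sub_le_sub_right (hmono k) L)
    have hr0 : Tendsto r atTop (nhds 0) := by
      have := hFL.sub_const L
      rwa [sub_self] at this
    obtain ⟨ρ, hρ, hball⟩ := Metric.mem_nhds_iff.mp hU
    set C : ℝ := b * lamUp / a with hCdef
    have hlamUp : 0 < lamUp := lt_of_lt_of_le hlam hlamle
    have hC : 0 ≤ C := by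
      rw [hCdef]
      exact div_nonneg (by positivity) ha.le
    have hkey : ∀ k, x (k+1) ∈ Metric.ball xb ρ → r (k+1) < η →
        d (k+1) ≤ d k / 2 + C / 2 * (φ (r (k+1)) - φ (r (k+2))) := by
      intro k hxk hrk
      have hlt1 : f xb < f (x (k+1)) := by
        rw [hfxb, hcoe]
        exact_mod_cast hcase (k+1)
      have hlt2 : f (x (k+1)) < f xb + (η : EReal) := by
        rw [hfxb, hcoe, ← EReal.coe_add]
        have : F (k+1) < L + η := by have := hrk; simp only [hrdef] at this; linarith
        exact_mod_cast this
      have hKL1 := hKLineq (x (k+1)) (hball hxk) hlt1 hlt2 (w k) (hwmem k)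
      rw [hfxb] at hKL1
      simp only [EReal.toReal_coe] at hKL1
      have hKL1' : 1 ≤ φ' (r (k+1)) * ‖w k‖ := hKL1
      obtain ⟨hder, hpos⟩ := hφd (r (k+1)) ⟨hrpos (k+1), hrk⟩
      have hs2 : r (k+2) ∈ Set.Ico (0:ℝ) η :=
        ⟨(hrpos _).le, lt_of_le_of_lt (hranti (by omega)) hrk⟩
      have ht2 : r (k+1) ∈ Set.Ico (0:ℝ) η := ⟨(hrpos _).le, hrk⟩
      have htan := concave_tangent_le hφconc hs2 ht2 (hranti (by omega)) hder
      have hstep : a * d (k+1)^2 ≤ r (k+1) - r (k+2) := by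
        simp only [hrdef]
        have := hdec (k+1)
        simp only [hddef] at this ⊢
        linarith
      have h1 : φ' (r (k+1)) * (a * d (k+1)^2) ≤ φ (r (k+1)) - φ (r (k+2)) := by
        refine le_trans ?_ htan
        calc φ' (r (k+1)) * (a * d (k+1)^2)
            ≤ φ' (r (k+1)) * (r (k+1) - r (k+2)) :=
              mul_le_mul_of_nonneg_left hstep hpos.le
          _ = φ' (r (k+1)) * (r (k+1) - r (k+2)) := rfl
      have hKL2 : 1 ≤ φ' (r (k+1)) * (b * lamUp * d k) :=
        le_trans hKL1' (mul_le_mul_of_nonneg_left (hwnorm' k) hpos.le)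
      set Δ : ℝ := φ (r (k+1)) - φ (r (k+2)) with hΔdef
      have hΔ : 0 ≤ Δ :=
        le_trans (mul_nonneg hpos.le (mul_nonneg ha.le (sq_nonneg _))) h1
      have h2 : a * d (k+1)^2 ≤ Δ * (b * lamUp * d k) := by
        have e1 : a * d (k+1)^2 * (φ' (r (k+1)) * (b * lamUp * d k))
            = (φ' (r (k+1)) * (a * d (k+1)^2)) * (b * lamUp * d k) := by ring
        calc a * d (k+1)^2 = a * d (k+1)^2 * 1 := by ring
          _ ≤ a * d (k+1)^2 * (φ' (r (k+1)) * (b * lamUp * d k)) := by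
              apply mul_le_mul_of_nonneg_left hKL2
              exact mul_nonneg ha.le (sq_nonneg _)
          _ = (φ' (r (k+1)) * (a * d (k+1)^2)) * (b * lamUp * d k) := e1
          _ ≤ Δ * (b * lamUp * d k) := by
              apply mul_le_mul_of_nonneg_right h1
              exact mul_nonneg (mul_nonneg hb.le hlamUp.le) (hdnn k)
      have hCΔ : d (k+1)^2 ≤ C * Δ * d k := by
        rw [hCdef]
        rw [div_mul_eq_mul_div, div_mul_eq_mul_div, le_div_iff₀ ha]
        nlinarith [h2]
      have hRnn : 0 ≤ d k / 2 + C / 2 * Δ := by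
        clear_value C Δ
        have h3 : 0 ≤ C / 2 * Δ := mul_nonneg (by linarith) hΔ
        linarith [hdnn k]
      have hsq2 : d (k+1)^2 ≤ (d k / 2 + C / 2 * Δ)^2 := by
        clear_value C Δ
        nlinarith [hCΔ, sq_nonneg (d k / 2 - C / 2 * Δ)]
      calc d (k+1) = Real.sqrt (d (k+1)^2) := (Real.sqrt_sq (hdnn _)).symm
        _ ≤ Real.sqrt ((d k / 2 + C / 2 * Δ)^2) := Real.sqrt_le_sqrt hsq2
        _ = d k / 2 + C / 2 * Δ := Real.sqrt_sq hRnn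
    -- choose K
    have hφr : Tendsto (fun k => φ (r k)) atTop (nhds 0) := by
      have hcw : ContinuousWithinAt φ (Set.Ico 0 η) 0 := hφcont 0 ⟨le_refl _, hη⟩
      have hrin : ∀ᶠ k in atTop, r k ∈ Set.Ico (0:ℝ) η := by
        filter_upwards [hr0.eventually_lt_const hη] with k hk
        exact ⟨(hrpos k).le, hk⟩
      have := hcw.tendsto.comp (tendsto_nhdsWithin_iff.mpr ⟨hr0, hrin⟩)
      simpa [hφ0, Function.comp_def] using this
    have hc1 : ∀ᶠ k in atTop, r k < η := hr0.eventually_lt_const hη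
    have hc2 : ∀ᶠ k in atTop, d k < ρ/8 := hd0.eventually_lt_const (by linarith)
    have hc3 : ∀ᶠ k in atTop, C * φ (r (k+1)) < ρ/4 := by
      have h := (hφr.comp (tendsto_add_atTop_nat 1)).const_mul C
      rw [mul_zero] at h
      exact h.eventually_lt_const (by linarith)
    have hc4 : ∃ᶠ k in atTop, dist (x k) xb < ρ/4 := by
      rw [frequently_atTop]
      intro N
      have hev : ∀ᶠ j in atTop, dist ((x ∘ σ) j) xb < ρ/4 :=
        (Metric.tendsto_nhds.mp hxσ) _ (by linarith)
      obtain ⟨j, hj1, hj2⟩ := (hev.and (eventually_ge_atTop N)).exists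
      exact ⟨σ j, le_trans hj2 hσ.le_apply, hj1⟩
    obtain ⟨K, ⟨hK1, hK2, hK3⟩, hK4⟩ :=
      ((hc1.and (hc2.and hc3)).and_frequently hc4).exists
    set B : ℝ := d K + C * φ (r (K+1)) with hBdef
    have hsum : ∀ M : ℕ, (∀ i, 1 ≤ i → i ≤ M → x (K + i) ∈ Metric.ball xb ρ) →
        (∑ j ∈ Finset.range M, d (K + j + 1)) ≤ B := by
      intro M hb'
      have hterm : ∀ j ∈ Finset.range M, d (K + j + 1) ≤
          d (K + j) / 2 + C / 2 * (φ (r (K + j + 1)) - φ (r (K + (j+1) + 1))) := by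
        intro j hj
        have hjM : j < M := Finset.mem_range.mp hj
        have hx' : x (K + j + 1) ∈ Metric.ball xb ρ := hb' (j+1) (by omega) (by omega)
        have hrlt : r (K + j + 1) < η := lt_of_le_of_lt (hranti (by omega)) hK1
        exact hkey (K + j) hx' hrlt
      have hidx : ∀ j : ℕ, K + (j + 1) = K + j + 1 := fun j => rfl
      have hK0 : K + 0 = K := rfl
      have h1 := Finset.sum_le_sum hterm
      rw [Finset.sum_add_distrib, ← Finset.mul_sum, ← Finset.sum_div,
        Finset.sum_range_sub' (fun j => φ (r (K + j + 1)))] at h1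
      simp only [hidx, hK0] at h1
      have h2 : ∑ j ∈ Finset.range M, d (K + j)
          ≤ d K + ∑ j ∈ Finset.range M, d (K + j + 1) := by
        rcases M with _ | M'
        · simpa using hdnn K
        · rw [Finset.sum_range_succ']
          simp only [hidx, hK0]
          have hsub : ∑ j ∈ Finset.range M', d (K + j + 1)
              ≤ ∑ j ∈ Finset.range (M' + 1), d (K + j + 1) :=
            Finset.sum_le_sum_of_subset_of_nonneg
              (Finset.range_subset_range.mpr (by omega)) (fun i _ _ => hdnn _)
          linarith [hsub]
      have hφnn1 : 0 ≤ φ (r (K + M + 1)) :=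
        hφnn _ ⟨(hrpos _).le, lt_of_le_of_lt (hranti (by omega)) hK1⟩
      rw [hBdef]
      have hCφ : 0 ≤ C / 2 * φ (r (K + M + 1)) := by
        clear_value C
        exact mul_nonneg (by linarith) hφnn1
      clear_value C
      nlinarith [h1, h2, hCφ]
    have hballs : ∀ i, 1 ≤ i → x (K + i) ∈ Metric.ball xb ρ := by
      intro i
      induction i using Nat.strong_induction_on with
      | _ i IH =>
        intro hi
        obtain ⟨M, rfl⟩ : ∃ M, i = M + 1 := ⟨i - 1, by omega⟩
        have hprev : ∀ j, 1 ≤ j → j ≤ M → x (K + j) ∈ Metric.ball xb ρ :=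
          fun j h1 h2 => IH j (by omega) h1
        have hT := hsum M hprev
        have hidx : ∀ j : ℕ, K + (j + 1) = K + j + 1 := fun j => rfl
        have hK0 : K + 0 = K := rfl
        have htel : x (K + M + 1) - x K
            = ∑ j ∈ Finset.range (M+1), (x (K + (j + 1)) - x (K + j)) :=
          (Finset.sum_range_sub (fun j => x (K + j)) (M+1)).symm
        have hnorm2 : ‖x (K + M + 1) - x K‖ ≤ ∑ j ∈ Finset.range (M+1), d (K + j) := by
          rw [htel]
          exact norm_sum_le _ _
        have hS : ∑ j ∈ Finset.range (M+1), d (K + j) ≤ d K + B := by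
          rw [Finset.sum_range_succ']
          simp only [hidx, hK0]
          linarith [hT]
        have hKM : (K + (M + 1) : ℕ) = K + M + 1 := by omega
        rw [hKM, Metric.mem_ball]
        calc dist (x (K + M + 1)) xb
            ≤ dist (x (K + M + 1)) (x K) + dist (x K) xb := dist_triangle _ _ _
          _ ≤ (d K + B) + dist (x K) xb := by
              apply add_le_add _ le_rfl
              rw [dist_eq_norm]
              exact hnorm2.trans hS
          _ < ρ := by
              rw [hBdef]
              have := hK2; have := hK3; have := hK4
              linarith
    have hTB : ∀ M, (∑ j ∈ Finset.range M, d (K + j + 1)) ≤ B := fun M =>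
      hsum M (fun i h1 _ => hballs i h1)
    have hsummable : Summable (fun j => d (K + j + 1)) :=
      summable_of_sum_range_le (fun j => hdnn _) hTB
    have hsummable2 : Summable (fun j => d (j + (K + 1))) :=
      hsummable.congr (fun j => by congr 1; omega)
    have hsummable' : Summable d := (summable_nat_add_iff (K+1)).mp hsummable2
    have hcauchy : CauchySeq x := by
      apply cauchySeq_of_summable_dist
      refine hsummable'.congr (fun k => ?_)
      rw [dist_eq_norm, norm_sub_rev]
    obtain ⟨xt, hxt⟩ := cauchySeq_tendsto_of_complete hcauchy
    have hxteq : xt = xb := tendsto_nhds_unique (hxt.comp hσtop) hxσ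
    exact ⟨xb, hxteq ▸ hxt, h0mem⟩
end
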